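/- Let m > 1, m₀ ∈ (1, m), α ≥ 0, c₁ < 0 < c₂, k₁ > 0, k₂ > 0. If ((m−1)/(α+m−1)) · (−c₁(α+m−1)/(2α))^{−α/(m−1)} · k₁^{(α+m−1)/(m−1)} + ((m₀−1)/(α+m−1)) · (−c₁(α+m−1)/(2(α+m−m₀)))^{−(α+m−m₀)/(m₀−1)} · c₂^{(α+m−1)/(m₀−1)} < k₂²/2, then there exists β ∈ (0,1) such that for all x ≥ 0: c₁ + c₂ x^{m₀−1} + k₁ x^{m−1} − (1−β)(k₂²/2) x^{α+m−1} ≤ 0. -/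

import Mathlib

open Real

lemma young_aux (A k u α' x : ℝ) (hA : 0 < A) (hk : 0 < k) (hu : 0 < u)
    (hα' : 0 < α') (hx : 0 ≤ x) :
    k * x ^ u ≤ A + (u / (α' + u)) * (A * (α' + u) / α') ^ (-(α' / u))
      * k ^ ((α' + u) / u) * x ^ (α' + u) := by
  set s := α' + u with hs_def
  have hs : 0 < s := by positivity
  set D := A * s / α' with hD_def
  have hD : 0 < D := by positivity
  set a := D ^ (α' / s) with ha_def
  set b := k * D ^ (-(α' / s)) * x ^ u with hb_def
  have ha : 0 < a := rpow_pos_of_pos hD _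
  have hb : 0 ≤ b := by positivity
  have hpq : (s / α').HolderConjugate (s / u) := by
    rw [Real.holderConjugate_iff]; constructor
    · rw [lt_div_iff₀ hα']; linarith
    · field_simp
      linarith
  have hyoung := Real.young_inequality_of_nonneg ha.le hb hpq
  have hab : a * b = k * x ^ u := by
    rw [ha_def, hb_def,
      show D ^ (α' / s) * (k * D ^ (-(α' / s)) * x ^ u)
        = (D ^ (α' / s) * D ^ (-(α' / s))) * k * x ^ u by ring,
      ← Real.rpow_add hD]
    simp
  have hap : a ^ (s / α') / (s / α') = A := by
    rw [ha_def, ← Real.rpow_mul hD.le,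
      show α' / s * (s / α') = 1 by field_simp,
      Real.rpow_one, hD_def]
    field_simp
  have hbq : b ^ (s / u) / (s / u)
      = (u / s) * D ^ (-(α' / u)) * k ^ (s / u) * x ^ s := by
    rw [hb_def, Real.mul_rpow (by positivity) (by positivity),
      Real.mul_rpow hk.le (by positivity),
      ← Real.rpow_mul hD.le, ← Real.rpow_mul hx,
      show -(α' / s) * (s / u) = -(α' / u) by field_simp,
      show u * (s / u) = s by field_simp]
    field_simp
  calc k * x ^ u = a * b := hab.symm
    _ ≤ a ^ (s / α') / (s / α') + b ^ (s / u) / (s / u) := hyoung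
    _ = A + (u / s) * D ^ (-(α' / u)) * k ^ (s / u) * x ^ s := by rw [hap, hbq]

theorem young_absorb_alpha (m m₀ α c₁ c₂ k₁ k₂ : ℝ) (hm : 1 < m)
    (hm₀ : m₀ ∈ Set.Ioo 1 m) (hα : 0 ≤ α) (hc₁ : c₁ < 0) (hc₂ : 0 < c₂)
    (hk₁ : 0 < k₁) (hk₂ : 0 < k₂)
    (hcond : ((m - 1) / (α + m - 1))
        * (-c₁ * (α + m - 1) / (2 * α)) ^ (-(α / (m - 1)))
        * k₁ ^ ((α + m - 1) / (m - 1))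
      + ((m₀ - 1) / (α + m - 1))
        * (-c₁ * (α + m - 1) / (2 * (α + m - m₀))) ^ (-((α + m - m₀) / (m₀ - 1)))
        * c₂ ^ ((α + m - 1) / (m₀ - 1))
      < k₂ ^ 2 / 2) :
    ∃ β ∈ Set.Ioo (0:ℝ) 1, ∀ x : ℝ, 0 ≤ x →
      c₁ + c₂ * x ^ (m₀ - 1) + k₁ * x ^ (m - 1)
        - (1 - β) * (k₂ ^ 2 / 2) * x ^ (α + m - 1) ≤ 0 := by
  obtain ⟨hm₀1, hm₀m⟩ := hm₀
  set T1 : ℝ := ((m - 1) / (α + m - 1))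
      * (-c₁ * (α + m - 1) / (2 * α)) ^ (-(α / (m - 1)))
      * k₁ ^ ((α + m - 1) / (m - 1)) with hT1_def
  set T2 : ℝ := ((m₀ - 1) / (α + m - 1))
      * (-c₁ * (α + m - 1) / (2 * (α + m - m₀))) ^ (-((α + m - m₀) / (m₀ - 1)))
      * c₂ ^ ((α + m - 1) / (m₀ - 1)) with hT2_def
  have hs : 0 < α + m - 1 := by linarith
  have hA : (0:ℝ) < -c₁ / 2 := by linarith
  -- first Young inequality
  have key1 : ∀ x : ℝ, 0 ≤ x →
      k₁ * x ^ (m - 1) ≤ -c₁ / 2 + T1 * x ^ (α + m - 1) := by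
    intro x hx
    rcases eq_or_lt_of_le hα with hα0 | hαpos
    · -- α = 0 : T1 = k₁ and the bound is trivial
      have hT1 : T1 = k₁ := by
        rw [hT1_def, ← hα0]
        rw [show (2 : ℝ) * 0 = 0 by ring]
        simp [div_self (show m - 1 ≠ 0 by linarith)]
      rw [hT1, ← hα0, zero_add]
      linarith
    · have h1 := young_aux (-c₁ / 2) k₁ (m - 1) α x hA hk₁ (by linarith) hαpos hx
      rw [show α + (m - 1) = α + m - 1 by ring] at h1
      rw [show -c₁ / 2 * (α + m - 1) / α = -c₁ * (α + m - 1) / (2 * α) by ring] at h1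
      exact h1
  -- second Young inequality
  have hα'2 : 0 < α + m - m₀ := by linarith
  have key2 : ∀ x : ℝ, 0 ≤ x →
      c₂ * x ^ (m₀ - 1) ≤ -c₁ / 2 + T2 * x ^ (α + m - 1) := by
    intro x hx
    have h2 := young_aux (-c₁ / 2) c₂ (m₀ - 1) (α + m - m₀) x hA hc₂
      (by linarith) hα'2 hx
    rw [show α + m - m₀ + (m₀ - 1) = α + m - 1 by ring] at h2
    rw [show -c₁ / 2 * (α + m - 1) / (α + m - m₀)
        = -c₁ * (α + m - 1) / (2 * (α + m - m₀)) by
          rw [eq_div_iff (by positivity : (2 * (α + m - m₀)) ≠ 0)]; field_simp] at h2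
    exact h2
  -- positivity of T1 and T2
  have hT1pos : 0 < T1 := by
    rcases eq_or_lt_of_le hα with hα0 | hαpos
    · have hT1 : T1 = k₁ := by
        rw [hT1_def, ← hα0]
        rw [show (2 : ℝ) * 0 = 0 by ring]
        simp [div_self (show m - 1 ≠ 0 by linarith)]
      rw [hT1]; exact hk₁
    · have hbase : 0 < -c₁ * (α + m - 1) / (2 * α) := by
        apply div_pos (by nlinarith) (by linarith)
      rw [hT1_def]
      have := rpow_pos_of_pos hbase (-(α / (m - 1)))
      have := rpow_pos_of_pos hk₁ ((α + m - 1) / (m - 1))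
      have : 0 < (m - 1) / (α + m - 1) := div_pos (by linarith) hs
      positivity
  have hT2pos : 0 < T2 := by
    have hbase : 0 < -c₁ * (α + m - 1) / (2 * (α + m - m₀)) := by
      apply div_pos (by nlinarith) (by linarith)
    rw [hT2_def]
    have := rpow_pos_of_pos hbase (-((α + m - m₀) / (m₀ - 1)))
    have := rpow_pos_of_pos hc₂ ((α + m - 1) / (m₀ - 1))
    have : 0 < (m₀ - 1) / (α + m - 1) := div_pos (by linarith) hs
    positivity
  set K : ℝ := k₂ ^ 2 / 2 with hK_def
  have hK : 0 < K := by positivity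
  have hTK : T1 + T2 < K := hcond
  refine ⟨(K - (T1 + T2)) / K, ⟨div_pos (by linarith) hK, ?_⟩, ?_⟩
  · rw [div_lt_one hK]; linarith
  · intro x hx
    have hβ : (1 - (K - (T1 + T2)) / K) * K = T1 + T2 := by
      field_simp
      ring
    rw [hβ]
    have h1 := key1 x hx
    have h2 := key2 x hx
    have hxs : 0 ≤ x ^ (α + m - 1) := rpow_nonneg hx _
    nlinarith [h1, h2]
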